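/- Let g ≥ 1 and p a prime, and for g > n ≥ 1 define the morphism φ: ℙ^1_{ℚ_p} → ℙ^{g−1}_{ℚ_p} given on ℙ^1 by the polynomials f_j(t) = p^{j(j−1)} t^{j−1} for 1 ≤ j ≤ n+1 and f_j = 0 for n+1 < j ≤ g. Then the image of φ(ℙ^1(ℚ_p)) under the reduction map to ℙ^{g−1}(𝔽_p) has cardinality exactly np + 1. -/

import Mathlib

open LinearAlgebra.Projectivization

/-- The image in `ℙ^{g−1}(𝔽_p)` of `φ(ℙ¹(ℚ_p))` under the reduction map, for the morphism `φ`
given by degree-`n` homogenizations of the polynomials `f j` (cf. the reduction of a point of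
projective space over `ℚ_p`: rescale the value vector to a primitive `ℤ_p`-vector and reduce
mod `p`). -/
def redImage (p : ℕ) [Fact p.Prime] (g n : ℕ) (f : Fin g → Polynomial ℚ_[p]) :
    Set (ℙ (ZMod p) (Fin g → ZMod p)) :=
  {q | ∃ x z : ℚ_[p], ¬(x = 0 ∧ z = 0) ∧
    ∃ u : Fin g → ℤ_[p], (∃ i, ‖u i‖ = 1) ∧
      (∃ c : ℚ_[p], ∀ i, (u i : ℚ_[p]) =
        c * ∑ k ∈ Finset.range (n + 1), (f i).coeff k * x ^ k * z ^ (n - k)) ∧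
      ∃ hu : (fun i => PadicInt.toZMod (u i)) ≠ (0 : Fin g → ZMod p),
        q = Projectivization.mk (ZMod p) (fun i => PadicInt.toZMod (u i)) hu}

namespace Stmt7Aux

variable {p : ℕ} [Fact p.Prime]

lemma toZMod_ne_zero_iff (x : ℤ_[p]) : PadicInt.toZMod x ≠ 0 ↔ ‖x‖ = 1 := by
  have h1 : PadicInt.toZMod x = 0 ↔ ‖x‖ < 1 := by
    rw [← RingHom.mem_ker, PadicInt.ker_toZMod, PadicInt.maximalIdeal_eq_span_p,
      Ideal.mem_span_singleton, ← PadicInt.norm_lt_one_iff_dvd]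
  constructor
  · intro h
    exact le_antisymm (PadicInt.norm_le_one x) (not_lt.mp fun hl => h (h1.mpr hl))
  · intro h h0
    rw [h1, h] at h0
    exact lt_irrefl _ h0

lemma norm_eq_one_iff_val {x : ℚ_[p]} (hx : x ≠ 0) : ‖x‖ = 1 ↔ x.valuation = 0 := by
  rw [Padic.norm_eq_zpow_neg_valuation hx]
  have h1p : (1 : ℝ) < p := by exact_mod_cast (Fact.out : p.Prime).one_lt
  constructor
  · intro h
    have := (zpow_right_strictMono₀ h1p).injective (h.trans (zpow_zero (p:ℝ)).symm)
    omega
  · intro h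
    rw [h, neg_zero, zpow_zero]

lemma val_pow {x : ℚ_[p]} (hx : x ≠ 0) (k : ℕ) : (x ^ k).valuation = k * x.valuation := by
  induction k with
  | zero => simp
  | succ k ih =>
    rw [pow_succ, Padic.valuation_mul (pow_ne_zero _ hx) hx, ih]
    push_cast; ring

lemma quad_step {b D : ℤ} {n : ℕ} (q : ℕ → ℤ) (hq : ∀ i : ℕ, i ≤ n → q i = (i:ℤ)^2 + b*i + D)
    (h0 : ∀ i : ℕ, i ≤ n → 0 ≤ q i) {i j : ℕ} (hi : i ≤ n) (hj : j ≤ n) (hij : i < j)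
    (hqi : q i = 0) (hqj : q j = 0) : j = i + 1 := by
  by_contra hne
  have h1 : i + 1 ≤ n := by omega
  have h2 : i + 1 < j := by omega
  rw [hq i hi] at hqi
  rw [hq j hj] at hqj
  have hb : ((j:ℤ) - i) * ((j:ℤ) + i + b) = 0 := by linear_combination hqj - hqi
  have hji : (j:ℤ) - i ≠ 0 := by
    have : (i:ℤ) < j := by exact_mod_cast hij
    omega
  have hb' : (j:ℤ) + i + b = 0 := by
    rcases mul_eq_zero.mp hb with h | h
    · exact absurd h hji
    · exact h
  have hbval : b = -((j:ℤ) + i) := by linarith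
  have hD : D = (i:ℤ) * j := by rw [hbval] at hqi; linear_combination hqi
  have h3 := h0 (i+1) h1
  rw [hq (i+1) h1] at h3
  have h4 : ((i+1:ℕ):ℤ)^2 + b*((i+1:ℕ):ℤ) + D = (i:ℤ)+1-j := by
    rw [hbval, hD]; push_cast; ring
  rw [h4] at h3
  have : (j:ℤ) ≤ (i:ℤ) + 1 := by linarith
  have : j ≤ i + 1 := by exact_mod_cast this
  omega


variable (p) in
/-- The model vector `e_j + a e_{j+1}`. -/
def W (g : ℕ) (j : ℕ) (a : ZMod p) : Fin g → ZMod p :=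
  fun i => if (i : ℕ) = j then 1 else if (i : ℕ) = j + 1 then a else 0

lemma W_ne_zero {g j : ℕ} (hj : j < g) (a : ZMod p) : W p g j a ≠ 0 := by
  intro h
  have := congrFun h ⟨j, hj⟩
  simp [W] at this

variable (p) in
/-- Enumeration of the image points. -/
noncomputable def G (g n : ℕ) (hn : 1 ≤ n) (hgn : n < g) :
    Fin n × ZMod p ⊕ Unit → ℙ (ZMod p) (Fin g → ZMod p)
  | Sum.inl (j, a) => Projectivization.mk (ZMod p) (W p g j a)
      (W_ne_zero (lt_trans j.2 hgn) a)
  | Sum.inr _ => Projectivization.mk (ZMod p) (W p g n 0) (W_ne_zero hgn 0)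

lemma W_mk_inj {g n : ℕ} (hgn : n < g) {j j' : ℕ} (hj : j ≤ n) (hj' : j' ≤ n)
    {a a' : ZMod p} (haj : j = n → a = 0) (haj' : j' = n → a' = 0)
    (h : Projectivization.mk (ZMod p) (W p g j a) (W_ne_zero (lt_of_le_of_lt hj hgn) a)
       = Projectivization.mk (ZMod p) (W p g j' a') (W_ne_zero (lt_of_le_of_lt hj' hgn) a')) :
    j = j' ∧ a = a' := by
  rw [Projectivization.mk_eq_mk_iff] at h
  obtain ⟨γ, hγ⟩ := h
  have h1 := congrFun hγ ⟨j, lt_of_le_of_lt hj hgn⟩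
  have h2 := congrFun hγ ⟨j', lt_of_le_of_lt hj' hgn⟩
  simp only [Pi.smul_apply, Units.smul_def, smul_eq_mul, W] at h1 h2
  by_cases hjj : j = j'
  · subst hjj
    refine ⟨rfl, ?_⟩
    simp only [if_pos rfl] at h1
    have hγ1 : (γ : ZMod p) = 1 := by simpa using h1
    rcases eq_or_lt_of_le hj with hjn | hjn
    · rw [haj hjn, haj' hjn]
    · have h3 := congrFun hγ ⟨j + 1, by omega⟩
      simp only [Pi.smul_apply, Units.smul_def, smul_eq_mul, W, hγ1, one_mul] at h3
      simpa using h3.symm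
  · exfalso
    by_cases hj1 : j = j' + 1
    · have hj'j : ¬ (j' = j) := fun h => hjj h.symm
      have hj'j1 : ¬ (j' = j + 1) := by omega
      simp [hj'j, hj'j1] at h2
    · simp [hjj, hj1] at h1

lemma G_inj {g n : ℕ} (hn : 1 ≤ n) (hgn : n < g) : Function.Injective (G p g n hn hgn) := by
  rintro (⟨j, a⟩ | ⟨⟩) (⟨j', a'⟩ | ⟨⟩) h
  · obtain ⟨h1, h2⟩ := W_mk_inj hgn (le_of_lt j.2) (le_of_lt j'.2)
      (fun h => absurd h (Nat.ne_of_lt j.2)) (fun h => absurd h (Nat.ne_of_lt j'.2)) h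
    simp only [Sum.inl.injEq, Prod.mk.injEq]
    exact ⟨Fin.ext h1, h2⟩
  · obtain ⟨h1, h2⟩ := W_mk_inj hgn (le_of_lt j.2) le_rfl
      (fun h => absurd h (Nat.ne_of_lt j.2)) (fun _ => rfl) h
    exact absurd h1 (Nat.ne_of_lt j.2)
  · obtain ⟨h1, h2⟩ := W_mk_inj hgn le_rfl (le_of_lt j'.2)
      (fun _ => rfl) (fun h => absurd h (Nat.ne_of_lt j'.2)) h
    exact absurd h1.symm (Nat.ne_of_lt j'.2)
  · rfl

lemma card_range_G {g n : ℕ} (hn : 1 ≤ n) (hgn : n < g) :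
    (Set.range (G p g n hn hgn)).ncard = n * p + 1 := by
  have hp : p ≠ 0 := (Fact.out : p.Prime).pos.ne'
  haveI : NeZero p := ⟨hp⟩
  rw [← Nat.card_coe_set_eq, Nat.card_range_of_injective (G_inj hn hgn),
    Nat.card_eq_fintype_card]
  simp [ZMod.card]


variable (p) in
noncomputable def F (g n : ℕ) : Fin g → Polynomial ℚ_[p] := fun i =>
  if (i : ℕ) ≤ n then
    Polynomial.C ((p : ℚ_[p]) ^ (((i : ℕ) + 1) * (i : ℕ))) * Polynomial.X ^ (i : ℕ)
  else 0

lemma sum_eval (g n : ℕ) (x z : ℚ_[p]) (i : Fin g) :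
    ∑ k ∈ Finset.range (n+1), (F p g n i).coeff k * x ^ k * z ^ (n - k)
      = if (i:ℕ) ≤ n then (p:ℚ_[p]) ^ (((i:ℕ)+1)*(i:ℕ)) * x ^ (i:ℕ) * z ^ (n-(i:ℕ)) else 0 := by
  by_cases h : (i:ℕ) ≤ n
  · rw [if_pos h]
    simp only [F, if_pos h]
    have hcoeff : ∀ k, (Polynomial.C ((p:ℚ_[p]) ^ (((i:ℕ)+1)*(i:ℕ))) * Polynomial.X ^ (i:ℕ)).coeff k
        = if k = (i:ℕ) then (p:ℚ_[p]) ^ (((i:ℕ)+1)*(i:ℕ)) else 0 := by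
      intro k
      rw [Polynomial.coeff_C_mul, Polynomial.coeff_X_pow]
      split <;> simp
    rw [Finset.sum_eq_single (i:ℕ)]
    · rw [hcoeff, if_pos rfl]
    · intro k hk hki
      rw [hcoeff, if_neg hki, zero_mul, zero_mul]
    · intro h'
      exact absurd (Finset.mem_range.mpr (Nat.lt_succ_of_le h)) h'
  · simp [F, if_neg h]

lemma toZMod_p_pow (k : ℕ) : PadicInt.toZMod ((p : ℤ_[p]) ^ k) = if k = 0 then 1 else 0 := by
  rcases k with _ | k
  · simp
  · rw [map_pow, map_natCast, ZMod.natCast_self, zero_pow (Nat.succ_ne_zero k)]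
    simp

lemma mem_of {g n : ℕ} (hn : 1 ≤ n) (hgn : n < g) (j : ℕ) (hj : j ≤ n) (a : ZMod p)
    (hja : j = n → a = 0) :
    Projectivization.mk (ZMod p) (W p g j a) (W_ne_zero (lt_of_le_of_lt hj hgn) a)
      ∈ redImage p g n (F p g n) := by
  have hp0 : (p : ℚ_[p]) ≠ 0 := Nat.cast_ne_zero.mpr (Fact.out : p.Prime).pos.ne'
  haveI : NeZero p := ⟨(Fact.out : p.Prime).pos.ne'⟩
  by_cases ha : a = 0
  · subst ha
    set u : Fin g → ℤ_[p] :=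
      fun i => if (i:ℕ) ≤ n then (p : ℤ_[p]) ^ ((((i:ℕ):ℤ) - j).natAbs ^ 2) else 0 with hudef
    have huj : u ⟨j, lt_of_le_of_lt hj hgn⟩ = 1 := by
      simp [hudef, hj]
    have hru : (fun i => PadicInt.toZMod (u i)) = W p g j 0 := by
      funext i
      by_cases hi : (i:ℕ) ≤ n
      · simp only [hudef, if_pos hi, toZMod_p_pow]
        by_cases hij : (i:ℕ) = j
        · rw [if_pos (by simp [hij]), W, if_pos hij]
        · rw [if_neg (by simp; omega), W, if_neg hij]
          split <;> rfl
      · simp only [hudef, if_neg hi, map_zero, W]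
        have h1 : ¬ ((i:ℕ) = j) := by omega
        have h2 : (i:ℕ) = j + 1 → (0:ZMod p) = 0 := fun _ => rfl
        rw [if_neg h1]
        split <;> rfl
    have hu : (fun i => PadicInt.toZMod (u i)) ≠ (0 : Fin g → ZMod p) := by
      rw [hru]
      exact W_ne_zero (lt_of_le_of_lt hj hgn) 0
    refine ⟨1, (p : ℚ_[p]) ^ (2*j+1), by simp, u, ⟨⟨j, lt_of_le_of_lt hj hgn⟩, by
      rw [huj]; exact norm_one⟩, ⟨(p : ℚ_[p]) ^ ((j:ℤ)^2 - (2*(j:ℤ)+1)*(n:ℤ)), ?_⟩, hu, ?_⟩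
    · intro i
      rw [sum_eval]
      by_cases hi : (i:ℕ) ≤ n
      · rw [if_pos hi]
        simp only [hudef, if_pos hi, PadicInt.coe_pow, PadicInt.coe_natCast]
        rw [one_pow, mul_one, ← pow_mul, ← pow_add]
        rw [← zpow_natCast (p:ℚ_[p]) ((((i:ℕ):ℤ) - j).natAbs ^ 2),
          ← zpow_natCast (p:ℚ_[p]) (((i:ℕ)+1)*(i:ℕ) + (2*j+1)*(n-(i:ℕ))), ← zpow_add₀ hp0]
        congr 1
        rw [Nat.cast_pow, Int.natAbs_sq]
        have hsub : ((n - (i:ℕ) : ℕ) : ℤ) = (n:ℤ) - ((i:ℕ):ℤ) := by omega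
        push_cast [hsub]
        ring
      · rw [if_neg hi]
        simp [hudef, if_neg hi]
    · rw [Projectivization.mk_eq_mk_iff]
      exact ⟨1, by rw [one_smul, hru]⟩
  · have hjn : j < n := lt_of_le_of_ne hj (fun h => ha (hja h))
    have hav : (a.val : ℚ_[p]) ≠ 0 := by
      rw [Nat.cast_ne_zero]
      exact fun h => ha ((ZMod.val_eq_zero a).mp h)
    have consec : ∀ m : ℤ, 0 ≤ m * (m - 1) := by
      intro m
      rcases le_or_gt 1 m with h | h
      · exact mul_nonneg (by linarith) (by linarith)
      · have hrw : m * (m - 1) = (-m) * (-(m - 1)) := by ring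
        rw [hrw]
        exact mul_nonneg (by omega) (by omega)
    set e : ℕ → ℕ := fun i => (((i:ℤ) - j) * ((i:ℤ) - j - 1)).toNat with hedef
    have hecast : ∀ i : ℕ, ((e i : ℕ) : ℤ) = ((i:ℤ) - j) * ((i:ℤ) - j - 1) :=
      fun i => Int.toNat_of_nonneg (consec _)
    have hejz : e j = 0 := by
      have := hecast j
      omega
    have hez : ∀ i : ℕ, e i = 0 ↔ (i = j ∨ i = j + 1) := by
      intro i
      have := hecast i
      constructor
      · intro h
        rw [h] at this
        have h2 : ((i:ℤ) - j) * ((i:ℤ) - j - 1) = 0 := by omega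
        rcases mul_eq_zero.mp h2 with h3 | h3 <;> omega
      · intro h
        rcases h with h | h <;> (subst h; omega)
    set w : ℤ_[p] := ((a.val : ℕ) : ℤ_[p]) with hwdef
    have hwred : PadicInt.toZMod w = a := by
      rw [hwdef, map_natCast, ZMod.natCast_zmod_val]
    set u : Fin g → ℤ_[p] :=
      fun i => if (i:ℕ) ≤ n then (p : ℤ_[p]) ^ (e (i:ℕ)) * w ^ (i:ℕ) else 0 with hudef
    have hredu : ∀ i : Fin g, PadicInt.toZMod (u i) =
        (if (i:ℕ) = j then a ^ j else if (i:ℕ) = j + 1 then a ^ (j+1) else 0) := by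
      intro i
      by_cases hi : (i:ℕ) ≤ n
      · have hui : u i = (p : ℤ_[p]) ^ (e (i:ℕ)) * w ^ (i:ℕ) := by simp [hudef, hi]
        rw [hui, map_mul, toZMod_p_pow, map_pow, hwred]
        by_cases hij : (i:ℕ) = j
        · rw [if_pos ((hez _).mpr (Or.inl hij)), if_pos hij, one_mul, hij]
        · by_cases hij1 : (i:ℕ) = j + 1
          · rw [if_pos ((hez _).mpr (Or.inr hij1)), if_neg hij, if_pos hij1, one_mul, hij1]
          · rw [if_neg (by rw [hez]; omega), if_neg hij, if_neg hij1, zero_mul]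
      · simp only [hudef, if_neg hi, map_zero]
        have h1 : ¬ ((i:ℕ) = j) := by omega
        have h2 : ¬ ((i:ℕ) = j + 1) := by omega
        rw [if_neg h1, if_neg h2]
    have haj : a ^ j ≠ 0 := pow_ne_zero _ ha
    have hu : (fun i => PadicInt.toZMod (u i)) ≠ (0 : Fin g → ZMod p) := by
      intro h
      have := congrFun h ⟨j, lt_of_le_of_lt hj hgn⟩
      rw [hredu] at this
      have h2 : a ^ j = 0 := by simpa using this
      exact haj h2
    refine ⟨(a.val : ℚ_[p]), (p : ℚ_[p]) ^ (2*j+2), fun h => hav h.1, u,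
      ⟨⟨j, lt_of_le_of_lt hj hgn⟩, ?_⟩,
      ⟨(p : ℚ_[p]) ^ ((j:ℤ)^2 + (j:ℤ) - (2*(j:ℤ)+2)*(n:ℤ)), ?_⟩, hu, ?_⟩
    · rw [← toZMod_ne_zero_iff, hredu]
      rw [if_pos rfl]
      exact haj
    · intro i
      rw [sum_eval]
      by_cases hi : (i:ℕ) ≤ n
      · rw [if_pos hi]
        simp only [hudef, hwdef, if_pos hi, PadicInt.coe_mul, PadicInt.coe_pow,
          PadicInt.coe_natCast]
        have key : ((p:ℚ_[p]) ^ (e (i:ℕ)) : ℚ_[p]) =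
            (p : ℚ_[p]) ^ ((j:ℤ)^2 + (j:ℤ) - (2*(j:ℤ)+2)*(n:ℤ)) *
              ((p:ℚ_[p]) ^ (((i:ℕ)+1)*(i:ℕ)) * ((p:ℚ_[p]) ^ (2*j+2)) ^ (n-(i:ℕ))) := by
          rw [← pow_mul, ← pow_add]
          rw [← zpow_natCast (p:ℚ_[p]) (e (i:ℕ)),
            ← zpow_natCast (p:ℚ_[p]) (((i:ℕ)+1)*(i:ℕ) + (2*j+2)*(n-(i:ℕ))), ← zpow_add₀ hp0]
          congr 1
          rw [hecast]
          have hsub : ((n - (i:ℕ) : ℕ) : ℤ) = (n:ℤ) - ((i:ℕ):ℤ) := by omega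
          push_cast [hsub]
          ring
        rw [key]
        ring
      · rw [if_neg hi]
        simp [hudef, if_neg hi]
    · rw [Projectivization.mk_eq_mk_iff]
      refine ⟨(Units.mk0 (a ^ j) haj)⁻¹, ?_⟩
      funext i
      rw [Pi.smul_apply, Units.smul_def, smul_eq_mul, hredu,
        Units.val_inv_eq_inv_val, Units.val_mk0]
      simp only [W]
      by_cases hij : (i:ℕ) = j
      · rw [if_pos hij, if_pos hij, inv_mul_cancel₀ haj]
      · by_cases hij1 : (i:ℕ) = j + 1
        · rw [if_neg hij, if_neg hij, if_pos hij1, if_pos hij1, pow_succ,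
            ← mul_assoc, inv_mul_cancel₀ haj, one_mul]
        · rw [if_neg hij, if_neg hij, if_neg hij1, if_neg hij1, mul_zero]


lemma forward {g n : ℕ} (hn : 1 ≤ n) (hgn : n < g) :
    redImage p g n (F p g n) ⊆ Set.range (G p g n hn hgn) := by
  have hp0 : (p : ℚ_[p]) ≠ 0 := Nat.cast_ne_zero.mpr (Fact.out : p.Prime).pos.ne'
  intro q hq
  obtain ⟨x, z, hxz, u, ⟨i₀, hi₀⟩, ⟨c, hc⟩, hu, rfl⟩ := hq
  simp only [sum_eval] at hc
  have hular : ∀ i : Fin g, n < (i:ℕ) → u i = 0 := by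
    intro i hi
    have h := hc i
    rw [if_neg (by omega), mul_zero] at h
    exact PadicInt.coe_eq_zero.mp h
  suffices h : ∃ (j : ℕ) (hjn : j ≤ n) (a s : ZMod p), s ≠ 0 ∧ (j = n → a = 0) ∧
      (fun i => PadicInt.toZMod (u i)) = s • W p g j a by
    obtain ⟨j, hjn, a, s, hs, hja, hr⟩ := h
    rcases lt_or_eq_of_le hjn with hlt | rfl
    · refine ⟨Sum.inl (⟨j, hlt⟩, a), ?_⟩
      show Projectivization.mk (ZMod p) (W p g j a) _ = _
      rw [Projectivization.mk_eq_mk_iff]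
      refine ⟨(Units.mk0 s hs)⁻¹, ?_⟩
      rw [hr, Units.smul_def, Units.val_inv_eq_inv_val, Units.val_mk0, smul_smul,
        inv_mul_cancel₀ hs, one_smul]
    · refine ⟨Sum.inr (), ?_⟩
      show Projectivization.mk (ZMod p) (W p g j 0) _ = _
      rw [hja rfl] at hr
      rw [Projectivization.mk_eq_mk_iff]
      refine ⟨(Units.mk0 s hs)⁻¹, ?_⟩
      rw [hr, Units.smul_def, Units.val_inv_eq_inv_val, Units.val_mk0, smul_smul,
        inv_mul_cancel₀ hs, one_smul]
  by_cases hz : z = 0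
  · -- the point at infinity reduces to e_n
    have hzero : ∀ i : Fin g, (i:ℕ) ≠ n → u i = 0 := by
      intro i hi
      rcases le_or_gt (i:ℕ) n with h | h
      · have h2 := hc i
        rw [if_pos h, hz, zero_pow (by omega : n - (i:ℕ) ≠ 0), mul_zero, mul_zero] at h2
        exact PadicInt.coe_eq_zero.mp h2
      · exact hular i h
    refine ⟨n, le_rfl, 0, PadicInt.toZMod (u ⟨n, hgn⟩), ?_, fun _ => rfl, ?_⟩
    · intro h0
      apply hu
      funext i
      by_cases hin : (i:ℕ) = n
      · have : i = ⟨n, hgn⟩ := Fin.ext hin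
        rw [this]; exact h0
      · rw [hzero i hin, map_zero]; rfl
    · funext i
      rw [Pi.smul_apply, smul_eq_mul]
      by_cases hin : (i:ℕ) = n
      · have : i = ⟨n, hgn⟩ := Fin.ext hin
        rw [this]
        show _ = _ * W p g n 0 ⟨n, hgn⟩
        simp [W]
      · rw [hzero i hin, map_zero]
        show (0 : ZMod p) = _ * W p g n 0 i
        simp only [W]
        rw [if_neg hin]
        split <;> simp
  by_cases hx : x = 0
  · -- the origin reduces to e_0
    have hzero : ∀ i : Fin g, (i:ℕ) ≠ 0 → u i = 0 := by
      intro i hi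
      rcases le_or_gt (i:ℕ) n with h | h
      · have h2 := hc i
        rw [if_pos h, hx, zero_pow hi, mul_zero, zero_mul, mul_zero] at h2
        exact PadicInt.coe_eq_zero.mp h2
      · exact hular i h
    refine ⟨0, by omega, 0, PadicInt.toZMod (u ⟨0, by omega⟩), ?_, fun h => rfl, ?_⟩
    · intro h0
      apply hu
      funext i
      by_cases hin : (i:ℕ) = 0
      · have : i = ⟨0, by omega⟩ := Fin.ext hin
        rw [this]; exact h0
      · rw [hzero i hin, map_zero]; rfl
    · funext i
      rw [Pi.smul_apply, smul_eq_mul]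
      by_cases hin : (i:ℕ) = 0
      · have : i = ⟨0, by omega⟩ := Fin.ext hin
        rw [this]
        show _ = _ * W p g 0 0 ⟨0, by omega⟩
        simp [W]
      · rw [hzero i hin, map_zero]
        show (0 : ZMod p) = _ * W p g 0 0 i
        simp only [W]
        rw [if_neg hin]
        split <;> simp
  -- main case
  have hc0 : c ≠ 0 := by
    intro h
    have h2 := hc i₀
    rw [h, zero_mul] at h2
    have : u i₀ = 0 := PadicInt.coe_eq_zero.mp h2
    rw [this, norm_zero] at hi₀
    exact zero_ne_one hi₀
  set q' : ℕ → ℤ := fun i =>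
    (i:ℤ)^2 + (1 + x.valuation - z.valuation) * i + (c.valuation + n * z.valuation) with hq'def
  have hune : ∀ i : Fin g, (i:ℕ) ≤ n → (u i : ℚ_[p]) ≠ 0 := by
    intro i hi
    rw [hc i, if_pos hi]
    exact mul_ne_zero hc0 (mul_ne_zero (mul_ne_zero (pow_ne_zero _ hp0) (pow_ne_zero _ hx))
      (pow_ne_zero _ hz))
  have hval : ∀ i : Fin g, (i:ℕ) ≤ n → ((u i : ℚ_[p])).valuation = q' (i:ℕ) := by
    intro i hi
    rw [hc i, if_pos hi]
    rw [Padic.valuation_mul hc0 (mul_ne_zero (mul_ne_zero (pow_ne_zero _ hp0)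
      (pow_ne_zero _ hx)) (pow_ne_zero _ hz)),
      Padic.valuation_mul (mul_ne_zero (pow_ne_zero _ hp0) (pow_ne_zero _ hx))
        (pow_ne_zero _ hz),
      Padic.valuation_mul (pow_ne_zero _ hp0) (pow_ne_zero _ hx),
      val_pow hp0, val_pow hx, val_pow hz, Padic.valuation_p]
    have hsub : ((n - (i:ℕ) : ℕ) : ℤ) = (n:ℤ) - ((i:ℕ):ℤ) := by omega
    rw [hq'def]
    push_cast [hsub]
    ring
  have hq'nonneg : ∀ i : ℕ, i ≤ n → 0 ≤ q' i := by
    intro i hi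
    have h0 : (0:ℤ) ≤ ((u ⟨i, by omega⟩ : ℚ_[p])).valuation := PadicInt.valuation_coe_nonneg
    rwa [hval ⟨i, by omega⟩ hi] at h0
  have hnorm1 : ∀ i : Fin g, (i:ℕ) ≤ n → (PadicInt.toZMod (u i) ≠ 0 ↔ q' (i:ℕ) = 0) := by
    intro i hi
    rw [toZMod_ne_zero_iff, PadicInt.norm_def, norm_eq_one_iff_val (hune i hi), hval i hi]
  have hi₀n : (i₀:ℕ) ≤ n := by
    by_contra h
    rw [hular i₀ (by omega), norm_zero] at hi₀
    exact zero_ne_one hi₀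
  have hq'i₀ : q' (i₀:ℕ) = 0 := by
    rw [← hval i₀ hi₀n, ← norm_eq_one_iff_val (hune i₀ hi₀n), ← PadicInt.norm_def]
    exact hi₀
  set J := Nat.findGreatest (fun m => q' m = 0) n with hJdef
  have hJn : J ≤ n := Nat.findGreatest_le n
  have hJ0 : q' J = 0 :=
    Nat.findGreatest_spec (P := fun m => q' m = 0) hi₀n hq'i₀
  have hmax : ∀ m : ℕ, m ≤ n → q' m = 0 → m = J ∨ m + 1 = J := by
    intro m hm hqm
    have hle : m ≤ J := Nat.le_findGreatest (P := fun m => q' m = 0) hm hqm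
    rcases eq_or_lt_of_le hle with h | h
    · exact Or.inl h
    · exact Or.inr (quad_step q' (fun i _ => rfl) hq'nonneg hm hJn h hqm hJ0).symm
  by_cases hJ1 : 1 ≤ J ∧ q' (J - 1) = 0
  · -- support {J-1, J}
    obtain ⟨hJpos, hJm1⟩ := hJ1
    have hjn : J - 1 ≤ n := by omega
    have hjg : J - 1 < g := by omega
    have hj1g : J - 1 + 1 < g := by omega
    set s := PadicInt.toZMod (u ⟨J - 1, hjg⟩) with hsdef
    have hs : s ≠ 0 := by
      rw [hsdef]
      exact (hnorm1 ⟨J - 1, hjg⟩ hjn).mpr hJm1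
    set a := s⁻¹ * PadicInt.toZMod (u ⟨J - 1 + 1, hj1g⟩) with hadef
    refine ⟨J - 1, hjn, a, s, hs, fun h => absurd h (by omega), ?_⟩
    funext i
    rw [Pi.smul_apply, smul_eq_mul]
    show _ = s * W p g (J - 1) a i
    simp only [W]
    by_cases hij : (i:ℕ) = J - 1
    · have : i = ⟨J - 1, hjg⟩ := Fin.ext hij
      rw [this, if_pos rfl, mul_one, hsdef]
    · rw [if_neg hij]
      by_cases hij1 : (i:ℕ) = J - 1 + 1
      · have : i = ⟨J - 1 + 1, hj1g⟩ := Fin.ext hij1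
        rw [this, if_pos rfl, hadef, ← mul_assoc, mul_inv_cancel₀ hs, one_mul]
      · rw [if_neg hij1, mul_zero]
        rcases le_or_gt (i:ℕ) n with h | h
        · by_contra hne
          have hq0 := (hnorm1 i h).mp hne
          rcases hmax (i:ℕ) h hq0 with h2 | h2 <;> omega
        · rw [hular i h, map_zero]
  · -- support {J}
    push_neg at hJ1
    refine ⟨J, hJn, 0, PadicInt.toZMod (u ⟨J, by omega⟩),
      (hnorm1 ⟨J, by omega⟩ hJn).mpr hJ0, fun _ => rfl, ?_⟩
    funext i
    rw [Pi.smul_apply, smul_eq_mul]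
    show _ = _ * W p g J 0 i
    simp only [W]
    by_cases hij : (i:ℕ) = J
    · have : i = ⟨J, by omega⟩ := Fin.ext hij
      rw [this, if_pos rfl, mul_one]
    · rw [if_neg hij]
      have hrhs : ∀ b : Prop, ∀ [Decidable b], (if b then (0:ZMod p) else 0) = 0 := by
        intro b _; split <;> rfl
      rw [hrhs, mul_zero]
      rcases le_or_gt (i:ℕ) n with h | h
      · by_contra hne
        have hq0 := (hnorm1 i h).mp hne
        rcases hmax (i:ℕ) h hq0 with h2 | h2
        · exact hij h2
        · have h3 : 1 ≤ J := by omega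
          have h4 : (i:ℕ) = J - 1 := by omega
          exact hJ1 h3 (h4 ▸ hq0)
      · rw [hular i h, map_zero]

end Stmt7Aux

/-- Sharpness of the bound `np + 1`: for `g > n ≥ 1` and the morphism
`φ : ℙ¹_{ℚ_p} → ℙ^{g−1}_{ℚ_p}` defined by `f_j(t) = p^{j(j−1)} t^{j−1}` for `1 ≤ j ≤ n+1` and
`f_j = 0` for `n+1 < j ≤ g` (here indexed by `i = j − 1`), the image of `φ(ℙ¹(ℚ_p))` under the
reduction map to `ℙ^{g−1}(𝔽_p)` has cardinality exactly `np + 1`. -/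
theorem stmt_7 (p : ℕ) [Fact p.Prime] (g n : ℕ) (hn : 1 ≤ n) (hgn : n < g) :
    (redImage p g n (fun i : Fin g =>
        if (i : ℕ) ≤ n then
          Polynomial.C ((p : ℚ_[p]) ^ (((i : ℕ) + 1) * (i : ℕ))) * Polynomial.X ^ (i : ℕ)
        else 0)).Finite ∧
    (redImage p g n (fun i : Fin g =>
        if (i : ℕ) ≤ n then
          Polynomial.C ((p : ℚ_[p]) ^ (((i : ℕ) + 1) * (i : ℕ))) * Polynomial.X ^ (i : ℕ)
        else 0)).ncard = n * p + 1 := by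
  have hset : redImage p g n (fun i : Fin g =>
      if (i : ℕ) ≤ n then
        Polynomial.C ((p : ℚ_[p]) ^ (((i : ℕ) + 1) * (i : ℕ))) * Polynomial.X ^ (i : ℕ)
      else 0) = Set.range (Stmt7Aux.G p g n hn hgn) := by
    have hF : (fun i : Fin g =>
        if (i : ℕ) ≤ n then
          Polynomial.C ((p : ℚ_[p]) ^ (((i : ℕ) + 1) * (i : ℕ))) * Polynomial.X ^ (i : ℕ)
        else 0) = Stmt7Aux.F p g n := rfl
    rw [hF]
    apply Set.Subset.antisymm (Stmt7Aux.forward hn hgn)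
    rintro _ ⟨(⟨j, a⟩ | ⟨⟩), rfl⟩
    · exact Stmt7Aux.mem_of hn hgn j (le_of_lt j.2) a (fun h => absurd h (Nat.ne_of_lt j.2))
    · exact Stmt7Aux.mem_of hn hgn n le_rfl 0 (fun _ => rfl)
  constructor
  · rw [hset]; exact Set.finite_range _
  · rw [hset]; exact Stmt7Aux.card_range_G hn hgn
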